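/- For compact sets A₁,…,A_m in ℝⁿ and subsets S, T ⊆ [m], the Schneider non-convexity index satisfies c(∑_{i∈S∪T} A_i) ≤ max(c(∑_{i∈S} A_i), c(∑_{i∈T} A_i)). -/

import Mathlib

open Pointwise

/-- The Schneider non-convexity index of a set `A ⊆ ℝⁿ`. -/
noncomputable def schneiderIndex {n : ℕ} (A : Set (EuclideanSpace ℝ (Fin n))) : ℝ :=
  sInf {lam : ℝ | 0 ≤ lam ∧ Convex ℝ (A + lam • convexHull ℝ A)}

section Aux

variable {E : Type*} [AddCommGroup E] [Module ℝ E]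

/-- If `A + lam • conv A` is convex, then it equals `(1+lam) • conv A`. -/
lemma schneider_eq_of_convex {A : Set E} {lam : ℝ} (hlam : 0 ≤ lam)
    (h : Convex ℝ (A + lam • convexHull ℝ A)) :
    A + lam • convexHull ℝ A = (1 + lam) • convexHull ℝ A := by
  have h1 : convexHull ℝ (A + lam • convexHull ℝ A)
      = convexHull ℝ A + lam • convexHull ℝ A := by
    rw [convexHull_add, convexHull_smul, (convex_convexHull ℝ A).convexHull_eq]
  have h2 : ((1:ℝ) + lam) • convexHull ℝ A
      = convexHull ℝ A + lam • convexHull ℝ A := by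
    rw [(convex_convexHull ℝ A).add_smul zero_le_one hlam, one_smul]
  rw [h2, ← h1, h.convexHull_eq]

/-- Conversely, `(1+lam) • conv A` always contains `A + lam • conv A`. -/
lemma schneider_subset {A : Set E} {lam : ℝ} (hlam : 0 ≤ lam) :
    A + lam • convexHull ℝ A ⊆ (1 + lam) • convexHull ℝ A := by
  have h2 : ((1:ℝ) + lam) • convexHull ℝ A
      = convexHull ℝ A + lam • convexHull ℝ A := by
    rw [(convex_convexHull ℝ A).add_smul zero_le_one hlam, one_smul]
  rw [h2]
  exact Set.add_subset_add_right (subset_convexHull ℝ A)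

/-- Monotonicity: admissible lambdas form an upward closed set. -/
lemma schneider_mono {A : Set E} {lam mu : ℝ} (hlam : 0 ≤ lam) (hle : lam ≤ mu)
    (h : Convex ℝ (A + lam • convexHull ℝ A)) :
    Convex ℝ (A + mu • convexHull ℝ A) := by
  have key : A + mu • convexHull ℝ A
      = (A + lam • convexHull ℝ A) + (mu - lam) • convexHull ℝ A := by
    rw [add_assoc]
    congr 1
    rw [← (convex_convexHull ℝ A).add_smul hlam (by linarith)]
    congr 1
    ring
  rw [key]
  exact h.add ((convex_convexHull ℝ A).smul _)

/-- The key union lemma. -/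
lemma schneider_union_convex {U V W : Set E} {lam : ℝ} (hlam : 0 ≤ lam)
    (hB : Convex ℝ (U + V + lam • convexHull ℝ (U + V)))
    (hC : Convex ℝ (V + W + lam • convexHull ℝ (V + W))) :
    Convex ℝ (U + V + W + lam • convexHull ℝ (U + V + W)) := by
  have key : U + V + W + lam • convexHull ℝ (U + V + W)
      = (1 + lam) • convexHull ℝ (U + V + W) := by
    apply Set.Subset.antisymm (schneider_subset hlam)
    have hBeq := schneider_eq_of_convex hlam hB
    have hCeq := schneider_eq_of_convex hlam hC
    calc (1 + lam) • convexHull ℝ (U + V + W)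
        = (1 + lam) • (convexHull ℝ (U + V) + convexHull ℝ W) := by
          rw [convexHull_add, convexHull_add]
      _ = (1 + lam) • convexHull ℝ (U + V) + (1 + lam) • convexHull ℝ W := by
          rw [smul_add]
      _ = (U + V + lam • convexHull ℝ (U + V)) + (1 + lam) • convexHull ℝ W := by
          rw [hBeq]
      _ = U + lam • convexHull ℝ U + (V + lam • convexHull ℝ V)
            + (1 + lam) • convexHull ℝ W := by
          simp only [convexHull_add, smul_add]; abel
      _ ⊆ U + lam • convexHull ℝ U + (1 + lam) • convexHull ℝ V
            + (1 + lam) • convexHull ℝ W := by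
          gcongr ?_ + _
          exact Set.add_subset_add_left (schneider_subset hlam)
      _ = U + lam • convexHull ℝ U + (1 + lam) • convexHull ℝ (V + W) := by
          rw [convexHull_add, smul_add, add_assoc]
      _ = U + lam • convexHull ℝ U + (V + W + lam • convexHull ℝ (V + W)) := by
          rw [hCeq]
      _ = U + V + W + lam • convexHull ℝ (U + V + W) := by
          simp only [convexHull_add, smul_add]; abel
  rw [key]
  exact (convex_convexHull ℝ _).smul _

end Aux

/-- In `ℝⁿ`, `A + n • conv A = (n+1) • conv A` is convex (Carathéodory). -/
lemma schneider_dim_mem {n : ℕ} (A : Set (EuclideanSpace ℝ (Fin n))) :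
    Convex ℝ (A + (n : ℝ) • convexHull ℝ A) := by
  classical
  rcases Nat.eq_zero_or_pos n with hn | hn
  · subst hn
    haveI : Subsingleton (EuclideanSpace ℝ (Fin 0)) :=
      ⟨fun a b => PiLp.ext fun i => Fin.elim0 i⟩
    intro x hx y hy a b ha hb hab
    have hxy : a • x + b • y = x := Subsingleton.elim _ _
    rwa [hxy]
  · have key : A + (n : ℝ) • convexHull ℝ A = ((n : ℝ) + 1) • convexHull ℝ A := by
      apply Set.Subset.antisymm
      · have := schneider_subset (A := A) (lam := (n : ℝ)) (by positivity)
        rwa [add_comm (1 : ℝ)] at this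
      · rintro y ⟨x, hx, rfl⟩
        obtain ⟨ι, hι, z, w, hzA, hindep, hwpos, hwsum, hxsum⟩ :=
          eq_pos_convex_span_of_mem_convexHull hx
        have hcard : Fintype.card ι ≤ n + 1 := by
          have h1 := hindep.card_le_finrank_succ
          have h2 := Submodule.finrank_le (vectorSpan ℝ (Set.range z))
          rw [finrank_euclideanSpace_fin] at h2
          omega
        -- find an index with large weight
        have hne : Nonempty ι := by
          by_contra h
          rw [not_nonempty_iff] at h
          simp [Finset.univ_eq_empty] at hwsum
        obtain ⟨i₀, hi₀⟩ : ∃ i₀ : ι, (1 : ℝ) ≤ ((n : ℝ) + 1) * w i₀ := by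
          by_contra h
          push_neg at h
          have hlt : ∑ i, ((n : ℝ) + 1) * w i < ∑ _i : ι, (1 : ℝ) :=
            Finset.sum_lt_sum_of_nonempty Finset.univ_nonempty fun i _ => h i
          rw [← Finset.mul_sum, hwsum, mul_one, Finset.sum_const, Finset.card_univ,
            nsmul_eq_mul, mul_one] at hlt
          have : (Fintype.card ι : ℝ) ≤ (n : ℝ) + 1 := by exact_mod_cast hcard
          linarith
        -- split off z i₀
        set w' : ι → ℝ := fun i => ((n : ℝ) + 1) * w i - if i = i₀ then 1 else 0 with hw'
        have hw'nonneg : ∀ i ∈ Finset.univ, 0 ≤ w' i := by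
          intro i _
          simp only [hw']
          have hwn : 0 ≤ ((n : ℝ) + 1) * w i :=
            mul_nonneg (by positivity) (hwpos i).le
          split_ifs with h
          · subst h; linarith
          · linarith
        have hw'sum : ∑ i, w' i = (n : ℝ) := by
          simp only [hw', Finset.sum_sub_distrib, ← Finset.mul_sum, hwsum,
            Finset.sum_ite_eq' Finset.univ i₀ (fun _ => (1:ℝ)), Finset.mem_univ, if_true]
          ring
        have hmem : Finset.univ.centerMass w' z ∈ convexHull ℝ A := by
          apply Finset.centerMass_mem_convexHull _ hw'nonneg
            (by rw [hw'sum]; exact_mod_cast hn)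
          intro i _
          exact hzA ⟨i, rfl⟩
        refine ⟨z i₀, hzA ⟨i₀, rfl⟩, (n : ℝ) • Finset.univ.centerMass w' z,
          Set.smul_mem_smul_set hmem, ?_⟩
        have hnne : (∑ i, w' i) ≠ 0 := by rw [hw'sum]; exact_mod_cast hn.ne'
        have hcm : (n : ℝ) • Finset.univ.centerMass w' z = ∑ i, w' i • z i := by
          rw [Finset.centerMass, smul_smul, ← hw'sum, mul_inv_cancel₀ hnne, one_smul]
        rw [hcm]
        have hsplit : ∑ i, w' i • z i = ∑ i, (((n : ℝ) + 1) * w i) • z i - z i₀ := by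
          simp only [hw', sub_smul, Finset.sum_sub_distrib, ite_smul, one_smul, zero_smul,
            Finset.sum_ite_eq' Finset.univ i₀ z, Finset.mem_univ, if_true]
        rw [hsplit]
        have : ∑ i, (((n : ℝ) + 1) * w i) • z i = ((n : ℝ) + 1) • x := by
          rw [← hxsum, Finset.smul_sum]
          simp [mul_smul]
        rw [this]
        module
    rw [key]
    exact (convex_convexHull ℝ _).smul _

theorem schneiderIndex_union_le {n m : ℕ} (A : Fin m → Set (EuclideanSpace ℝ (Fin n)))
    (hc : ∀ i, IsCompact (A i)) (S T : Finset (Fin m)) :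
    schneiderIndex (∑ i ∈ S ∪ T, A i) ≤
      max (schneiderIndex (∑ i ∈ S, A i)) (schneiderIndex (∑ i ∈ T, A i)) := by
  classical
  set U : Set (EuclideanSpace ℝ (Fin n)) := ∑ i ∈ S \ T, A i with hU
  set V : Set (EuclideanSpace ℝ (Fin n)) := ∑ i ∈ S ∩ T, A i with hV
  set W : Set (EuclideanSpace ℝ (Fin n)) := ∑ i ∈ T \ S, A i with hW
  have hS : ∑ i ∈ S, A i = U + V := by
    rw [hU, hV, ← Finset.sum_union (Finset.disjoint_sdiff_inter S T),
      Finset.sdiff_union_inter]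
  have hdVW : Disjoint (S ∩ T) (T \ S) := by
    simp [Finset.disjoint_left, Finset.mem_inter, Finset.mem_sdiff]
    tauto
  have hT : ∑ i ∈ T, A i = V + W := by
    rw [hV, hW, ← Finset.sum_union hdVW, Finset.inter_comm, Finset.union_comm,
      Finset.sdiff_union_inter]
  have hST : ∑ i ∈ S ∪ T, A i = U + V + W := by
    rw [add_assoc, ← hT, hU, ← Finset.sum_union (Finset.sdiff_disjoint),
      Finset.sdiff_union_self_eq_union]
  rw [hS, hT, hST]
  set ΛB := {lam : ℝ | 0 ≤ lam ∧ Convex ℝ (U + V + lam • convexHull ℝ (U + V))} with hΛB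
  set ΛC := {lam : ℝ | 0 ≤ lam ∧ Convex ℝ (V + W + lam • convexHull ℝ (V + W))} with hΛC
  have hBne : (n : ℝ) ∈ ΛB := ⟨Nat.cast_nonneg n, schneider_dim_mem _⟩
  have hCne : (n : ℝ) ∈ ΛC := ⟨Nat.cast_nonneg n, schneider_dim_mem _⟩
  have hbddD : BddBelow {lam : ℝ | 0 ≤ lam ∧
      Convex ℝ (U + V + W + lam • convexHull ℝ (U + V + W))} := ⟨0, fun x hx => hx.1⟩
  apply le_of_forall_pos_le_add
  intro ε hε
  obtain ⟨lam, hlamB, hlam⟩ := Real.lt_sInf_add_pos ⟨_, hBne⟩ hε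
  obtain ⟨mu, hmuC, hmu⟩ := Real.lt_sInf_add_pos ⟨_, hCne⟩ hε
  set ν := max lam mu with hν
  have hνB : Convex ℝ (U + V + ν • convexHull ℝ (U + V)) :=
    schneider_mono hlamB.1 (le_max_left _ _) hlamB.2
  have hνC : Convex ℝ (V + W + ν • convexHull ℝ (V + W)) :=
    schneider_mono hmuC.1 (le_max_right _ _) hmuC.2
  have hν0 : 0 ≤ ν := le_trans hlamB.1 (le_max_left _ _)
  have hνD : ν ∈ {lam : ℝ | 0 ≤ lam ∧
      Convex ℝ (U + V + W + lam • convexHull ℝ (U + V + W))} :=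
    ⟨hν0, schneider_union_convex hν0 hνB hνC⟩
  calc schneiderIndex (U + V + W) ≤ ν := csInf_le hbddD hνD
    _ ≤ max (sInf ΛB) (sInf ΛC) + ε := by
        apply max_le
        · exact le_trans hlam.le (by simp [le_max_left, add_le_add_right])
        · exact le_trans hmu.le (by simp [le_max_right, add_le_add_right])
    _ = max (schneiderIndex (U + V)) (schneiderIndex (V + W)) + ε := rfl
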